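/- Let f : (S,F,μ,◁) → (S',F',μ',◁') be an inclusion of ordered probability spaces, let W be a poset kernel on S, and set A = f⁻¹(F'). If W is equal μ⊗μ-almost everywhere to a version of E(W | A⊗A), then there exists a function U : S'² → [0,1], F'⊗F'-measurable, satisfying the kernel axioms almost everywhere on (S',μ'), such that W(x,y) = U(f(x),f(y)) for μ⊗μ-almost every (x,y). -/

import Mathlib

open MeasureTheory
open scoped ENNReal

lemma doobDynkinENN {α β : Type*} {mβ : MeasurableSpace β} (f : α → β) (φ : α → ℝ≥0∞)
    (hφ : Measurable[mβ.comap f] φ) :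
    ∃ V : β → ℝ≥0∞, Measurable V ∧ ∀ x, φ x = V (f x) := by
  have hB : ∀ q : ℚ, ∃ B : Set β, MeasurableSet B ∧
      f ⁻¹' B = φ ⁻¹' (Set.Ioi (ENNReal.ofReal q)) := fun q => hφ measurableSet_Ioi
  choose B hBmeas hBpre using hB
  refine ⟨fun y => ⨆ q : ℚ, (B q).indicator (fun _ => ENNReal.ofReal q) y,
    Measurable.iSup fun q => measurable_const.indicator (hBmeas q), fun x => ?_⟩
  have key : ∀ a : ℝ≥0∞, a = ⨆ (q : ℚ) (_ : ENNReal.ofReal q < a), ENNReal.ofReal q := by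
    intro a
    refine le_antisymm ?_ (iSup₂_le fun q hq => hq.le)
    refine le_of_forall_lt fun c hc => ?_
    obtain ⟨q, hq0, hcq, hqa⟩ := ENNReal.lt_iff_exists_rat_btwn.1 hc
    have h1 : (Real.toNNReal q : ℝ≥0∞) = ENNReal.ofReal q := rfl
    rw [h1] at hcq hqa
    have : ENNReal.ofReal q ≤ ⨆ (q : ℚ) (_ : ENNReal.ofReal q < a), ENNReal.ofReal q :=
      le_iSup₂ (f := fun (q : ℚ) (_ : ENNReal.ofReal (q:ℝ) < a) => ENNReal.ofReal (q:ℝ)) q hqa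
    exact lt_of_lt_of_le hcq this
  calc φ x = ⨆ (q : ℚ) (_ : ENNReal.ofReal q < φ x), ENNReal.ofReal q := key _
    _ = ⨆ q : ℚ, (B q).indicator (fun _ => ENNReal.ofReal q) (f x) := by
        refine iSup_congr fun q => ?_
        have hmem : f x ∈ B q ↔ ENNReal.ofReal q < φ x := by
          constructor
          · intro h
            have := (Set.ext_iff.1 (hBpre q) x).1 h
            simpa using this
          · intro h
            exact (Set.ext_iff.1 (hBpre q) x).2 (by simpa using h)
        by_cases h : ENNReal.ofReal q < φ x
        · simp [Set.indicator_apply, hmem, h]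
        · simp [Set.indicator_apply, hmem, h]

theorem stmt9 {S S' : Type*} {F : MeasurableSpace S} {F' : MeasurableSpace S'}
    (μ : Measure S) [IsProbabilityMeasure μ] (μ' : Measure S') [IsProbabilityMeasure μ']
    (r : S → S → Prop) (hirr : ∀ x, ¬ r x x)
    (htrans : ∀ x y z, r x y → r y z → r x z)
    (hrmeas : MeasurableSet {p : S × S | r p.1 p.2})
    (r' : S' → S' → Prop) (hirr' : ∀ x, ¬ r' x x)
    (htrans' : ∀ x y z, r' x y → r' y z → r' x z)
    (hrmeas' : MeasurableSet {p : S' × S' | r' p.1 p.2})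
    -- `f` is an inclusion of ordered probability spaces
    (f : S → S') (hf : MeasurePreserving f μ μ')
    (hford : (μ.prod μ) {p : S × S | r p.1 p.2 ∧ ¬ r' (f p.1) (f p.2)} = 0)
    -- `W` is a poset kernel on `S`
    (W : S → S → ℝ) (hWmeas : Measurable (fun p : S × S => W p.1 p.2))
    (hWrange : ∀ x y, W x y ∈ Set.Icc (0:ℝ) 1)
    (hax1 : ∀ x y, 0 < W x y → r x y)
    (hax2 : ∀ x y z, 0 < W x y → 0 < W y z → W x z = 1)
    -- `W` agrees a.e. with its conditional expectation on `𝒜 ⊗ 𝒜`, `𝒜 = f⁻¹(F')`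
    (hWcond : (fun p : S × S => W p.1 p.2) =ᵐ[μ.prod μ]
      (μ.prod μ)[(fun p : S × S => W p.1 p.2) |
        (MeasurableSpace.comap f F').prod (MeasurableSpace.comap f F')]) :
    ∃ U : S' → S' → ℝ,
      Measurable (fun p : S' × S' => U p.1 p.2) ∧
      (∀ x y, U x y ∈ Set.Icc (0:ℝ) 1) ∧
      (∀ᵐ p : S' × S' ∂(μ'.prod μ'), 0 < U p.1 p.2 → r' p.1 p.2) ∧
      (∀ᵐ t : S' × S' × S' ∂(μ'.prod (μ'.prod μ')),
        0 < U t.1 t.2.1 → 0 < U t.2.1 t.2.2 → U t.1 t.2.2 = 1) ∧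
      (fun p : S × S => W p.1 p.2) =ᵐ[μ.prod μ] (fun p : S × S => U (f p.1) (f p.2)) := by
  classical
  have hm_eq : (MeasurableSpace.comap f F').prod (MeasurableSpace.comap f F')
      = (F'.prod F').comap (Prod.map f f) := by
    have e1 : f ∘ (Prod.fst : S × S → S) = (Prod.fst : S' × S' → S') ∘ Prod.map f f := rfl
    have e2 : f ∘ (Prod.snd : S × S → S) = (Prod.snd : S' × S' → S') ∘ Prod.map f f := rfl
    unfold MeasurableSpace.prod
    rw [MeasurableSpace.comap_sup, MeasurableSpace.comap_comp, MeasurableSpace.comap_comp,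
      MeasurableSpace.comap_comp, MeasurableSpace.comap_comp, e1, e2]
  set g : S × S → ℝ := (μ.prod μ)[(fun p : S × S => W p.1 p.2) |
    (MeasurableSpace.comap f F').prod (MeasurableSpace.comap f F')] with hgdef
  have hgmeas : Measurable[(F'.prod F').comap (Prod.map f f)] g := by
    rw [← hm_eq]
    exact stronglyMeasurable_condExp.measurable
  obtain ⟨V, hVmeas, hVeq⟩ := doobDynkinENN (Prod.map f f)
    (fun p => ENNReal.ofReal (g p)) (ENNReal.measurable_ofReal.comp hgmeas)
  set U : S' → S' → ℝ := fun a b => max 0 (min 1 (V (a, b)).toReal) with hUdef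
  have hUmeas : Measurable (fun p : S' × S' => U p.1 p.2) := by
    have : (fun p : S' × S' => U p.1 p.2)
        = fun p : S' × S' => max 0 (min 1 (V p).toReal) := rfl
    rw [this]
    exact measurable_const.max (measurable_const.min (hVmeas.ennreal_toReal))
  have hUrange : ∀ x y, U x y ∈ Set.Icc (0:ℝ) 1 :=
    fun x y => ⟨le_max_left _ _, max_le zero_le_one (min_le_left _ _)⟩
  -- the key a.e. identity
  have hWU : (fun p : S × S => W p.1 p.2) =ᵐ[μ.prod μ]
      (fun p : S × S => U (f p.1) (f p.2)) := by
    filter_upwards [hWcond] with p hp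
    have h1 : ENNReal.ofReal (g p) = V (f p.1, f p.2) := hVeq p
    have h2 : U (f p.1) (f p.2) = max 0 (min 1 (ENNReal.ofReal (g p)).toReal) := by
      rw [hUdef]; simp only [← h1]
    have hgp : g p = W p.1 p.2 := hp.symm
    rw [h2, hgp, ENNReal.toReal_ofReal (hWrange p.1 p.2).1,
      min_eq_right (hWrange p.1 p.2).2, max_eq_right (hWrange p.1 p.2).1]
  -- measure-preserving maps
  have hff : MeasurePreserving (Prod.map f f) (μ.prod μ) (μ'.prod μ') := hf.prod hf
  have h3 : MeasurePreserving (Prod.map f (Prod.map f f))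
      (μ.prod (μ.prod μ)) (μ'.prod (μ'.prod μ')) := hf.prod hff
  have hford' : ∀ᵐ p : S × S ∂(μ.prod μ), r p.1 p.2 → r' (f p.1) (f p.2) := by
    rw [ae_iff]
    have : {p : S × S | ¬(r p.1 p.2 → r' (f p.1) (f p.2))}
        = {p : S × S | r p.1 p.2 ∧ ¬ r' (f p.1) (f p.2)} := by
      ext p; simp [Classical.not_imp]
    rw [this]; exact hford
  refine ⟨U, hUmeas, hUrange, ?_, ?_, hWU⟩
  · -- axiom 1 a.e.
    have hset : MeasurableSet {p : S' × S' | 0 < U p.1 p.2 → r' p.1 p.2} := by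
      have : {p : S' × S' | 0 < U p.1 p.2 → r' p.1 p.2}
          = (({p : S' × S' | 0 < U p.1 p.2}) ∩ ({p : S' × S' | r' p.1 p.2})ᶜ)ᶜ := by
        ext p
        simp only [Set.mem_compl_iff, Set.mem_inter_iff, Set.mem_setOf_eq]
        tauto
      rw [this]
      exact ((hUmeas measurableSet_Ioi).inter hrmeas'.compl).compl
    rw [← hff.map_eq, ae_map_iff hff.measurable.aemeasurable hset]
    filter_upwards [hWU, hford'] with p h1 h2
    intro h
    exact h2 (hax1 p.1 p.2 (by rw [h1]; exact h))
  · -- axiom 2 a.e.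
    have mpfst : MeasurePreserving (Prod.fst : S × S → S) (μ.prod μ) μ :=
      ⟨measurable_fst, by simp⟩
    have mpsnd : MeasurePreserving (Prod.snd : S × S → S) (μ.prod μ) μ :=
      ⟨measurable_snd, by simp⟩
    have mpsnd3 : MeasurePreserving (Prod.snd : S × (S × S) → S × S)
        (μ.prod (μ.prod μ)) (μ.prod μ) := ⟨measurable_snd, by simp⟩
    have h12 : MeasurePreserving (Prod.map (id : S → S) (Prod.fst : S × S → S))
        (μ.prod (μ.prod μ)) (μ.prod μ) := (MeasurePreserving.id μ).prod mpfst
    have h13 : MeasurePreserving (Prod.map (id : S → S) (Prod.snd : S × S → S))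
        (μ.prod (μ.prod μ)) (μ.prod μ) := (MeasurePreserving.id μ).prod mpsnd
    have e12 := h12.quasiMeasurePreserving.ae_eq_comp hWU
    have e23 := mpsnd3.quasiMeasurePreserving.ae_eq_comp hWU
    have e13 := h13.quasiMeasurePreserving.ae_eq_comp hWU
    have hset2 : MeasurableSet {t : S' × S' × S' |
        0 < U t.1 t.2.1 → 0 < U t.2.1 t.2.2 → U t.1 t.2.2 = 1} := by
      have m12 : Measurable fun t : S' × S' × S' => (t.1, t.2.1) :=
        measurable_fst.prodMk (measurable_fst.comp measurable_snd)
      have m23 : Measurable fun t : S' × S' × S' => (t.2.1, t.2.2) :=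
        (measurable_fst.comp measurable_snd).prodMk (measurable_snd.comp measurable_snd)
      have m13 : Measurable fun t : S' × S' × S' => (t.1, t.2.2) :=
        measurable_fst.prodMk (measurable_snd.comp measurable_snd)
      have hs1 : MeasurableSet {t : S' × S' × S' | 0 < U t.1 t.2.1} :=
        (hUmeas.comp m12) measurableSet_Ioi
      have hs2 : MeasurableSet {t : S' × S' × S' | 0 < U t.2.1 t.2.2} :=
        (hUmeas.comp m23) measurableSet_Ioi
      have hs3 : MeasurableSet {t : S' × S' × S' | U t.1 t.2.2 = 1} :=
        (hUmeas.comp m13) (measurableSet_singleton 1)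
      have : {t : S' × S' × S' | 0 < U t.1 t.2.1 → 0 < U t.2.1 t.2.2 → U t.1 t.2.2 = 1}
          = ({t : S' × S' × S' | 0 < U t.1 t.2.1} ∩
             ({t : S' × S' × S' | 0 < U t.2.1 t.2.2} ∩
              ({t : S' × S' × S' | U t.1 t.2.2 = 1})ᶜ))ᶜ := by
        ext t
        simp only [Set.mem_compl_iff, Set.mem_inter_iff, Set.mem_setOf_eq]
        tauto
      rw [this]
      exact (hs1.inter (hs2.inter hs3.compl)).compl
    rw [← h3.map_eq, ae_map_iff h3.measurable.aemeasurable hset2]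
    filter_upwards [e12, e23, e13] with t a b c
    intro h1 h2
    have ha : 0 < W t.1 t.2.1 := by
      have : W t.1 t.2.1 = U (f t.1) (f t.2.1) := a
      rw [this]; exact h1
    have hb : 0 < W t.2.1 t.2.2 := by
      have : W t.2.1 t.2.2 = U (f t.2.1) (f t.2.2) := b
      rw [this]; exact h2
    have hc : W t.1 t.2.2 = U (f t.1) (f t.2.2) := c
    show U (f t.1) (f t.2.2) = 1
    rw [← hc]
    exact hax2 t.1 t.2.1 t.2.2 ha hb
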